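/- Let f(z) = z + λ and g(z) = z/(μz + 1), where λ and μ are real numbers. The semigroup generated by f and g is semidiscrete and inverse free if and only if λμ ∉ (−4, 0]. -/

import Mathlib

open Filter Topology

noncomputable section

namespace MobiusSG

/-- The extended complex plane (Riemann sphere), with the one-point
compactification topology (which agrees with the chordal topology). -/
abbrev CHat : Type := OnePoint ℂ

/-- Self-maps of the extended complex plane. -/
abbrev MoebMap : Type := CHat → CHat

/-- The chordal metric χ on the extended complex plane. -/
def chordal : CHat → CHat → ℝ
  | OnePoint.some z, OnePoint.some w =>
      2 * ‖z - w‖ /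
        (Real.sqrt (1 + ‖z‖ ^ 2) * Real.sqrt (1 + ‖w‖ ^ 2))
  | OnePoint.some z, OnePoint.infty => 2 / Real.sqrt (1 + ‖z‖ ^ 2)
  | OnePoint.infty, OnePoint.some w => 2 / Real.sqrt (1 + ‖w‖ ^ 2)
  | OnePoint.infty, OnePoint.infty => 0

/-- The Möbius transformation z ↦ (az+b)/(cz+d), as a self-map of the sphere. -/
def mobiusFun (a b c d : ℝ) : MoebMap := fun z =>
  match z with
  | OnePoint.infty =>
      if c = 0 then OnePoint.infty else OnePoint.some ((a : ℂ) / (c : ℂ))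
  | OnePoint.some z =>
      if (c : ℂ) * z + (d : ℂ) = 0 then OnePoint.infty
      else OnePoint.some (((a : ℂ) * z + (b : ℂ)) / ((c : ℂ) * z + (d : ℂ)))

/-- The group 𝓜 of real Möbius transformations z ↦ (az+b)/(cz+d), ad − bc > 0. -/
def Mob : Set MoebMap :=
  {f | ∃ a b c d : ℝ, 0 < a * d - b * c ∧ f = mobiusFun a b c d}

/-- The uniform metric χ₀ on 𝓜. -/
def mDist (f g : MoebMap) : ℝ := ⨆ z : CHat, chordal (f z) (g z)

/-- The upper half-plane ℍ, as a subset of ℂ. -/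
def UHP : Set ℂ := {z | 0 < z.im}

/-- The extended real line ℝ̄ = ℝ ∪ {∞}, as a subset of the sphere. -/
def RExt : Set CHat :=
  {p | p = OnePoint.infty ∨ ∃ x : ℝ, p = OnePoint.some (x : ℂ)}

/-- The closed upper half-plane ℍ̄ = ℍ ∪ ℝ̄, as a subset of the sphere. -/
def HBar : Set CHat :=
  {p | p = OnePoint.infty ∨ ∃ z : ℂ, 0 ≤ z.im ∧ p = OnePoint.some z}

/-- Finite part of a point of the sphere (junk value 0 at ∞). -/
def toC : CHat → ℂ
  | OnePoint.infty => 0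
  | OnePoint.some z => z

/-- The hyperbolic metric ρ on the upper half-plane. -/
def hypDist (z w : ℂ) : ℝ :=
  2 * Real.arsinh (‖z - w‖ / (2 * Real.sqrt (z.im * w.im)))

/-- A semigroup: a nonempty subset of 𝓜 closed under composition. -/
def IsSemigroupOn (S : Set MoebMap) : Prop :=
  S.Nonempty ∧ S ⊆ Mob ∧ ∀ f ∈ S, ∀ g ∈ S, f ∘ g ∈ S

/-- S is semidiscrete: the identity is not an accumulation point of S in (𝓜, χ₀). -/
def Semidiscrete (S : Set MoebMap) : Prop :=
  ¬ ∀ ε : ℝ, 0 < ε → ∃ f ∈ S, f ≠ id ∧ mDist f id < ε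

/-- S is inverse free: no member of S has its inverse in S. -/
def InverseFree (S : Set MoebMap) : Prop :=
  ∀ f ∈ S, ∀ g ∈ S, f ∘ g ≠ id

/-- Membership in the semigroup generated by F. -/
inductive GenBy (F : Set MoebMap) : MoebMap → Prop
  | base {f : MoebMap} : f ∈ F → GenBy F f
  | comp {f g : MoebMap} : GenBy F f → GenBy F g → GenBy F (f ∘ g)

/-- The semigroup generated by F: all finite compositions of members of F. -/
def semigroupGen (F : Set MoebMap) : Set MoebMap := {f | GenBy F f}

/-- Membership in the group generated (as a group) by F. -/
inductive GrpGenBy (F : Set MoebMap) : MoebMap → Prop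
  | one : GrpGenBy F id
  | base {f : MoebMap} : f ∈ F → GrpGenBy F f
  | comp {f g : MoebMap} : GrpGenBy F f → GrpGenBy F g → GrpGenBy F (f ∘ g)
  | inv {f g : MoebMap} : GrpGenBy F f → f ∘ g = id → g ∘ f = id → GrpGenBy F g

/-- The group generated (as a group) by F. -/
def groupGen (F : Set MoebMap) : Set MoebMap := {f | GrpGenBy F f}

/-- (Fs n) is a composition sequence generated by F: Fs n = f 0 ∘ f 1 ∘ ⋯ ∘ f n
with each f i ∈ F. -/
def IsCompSeq (F : Set MoebMap) (Fs : ℕ → MoebMap) : Prop :=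
  ∃ f : ℕ → MoebMap, (∀ n, f n ∈ F) ∧ Fs 0 = f 0 ∧ ∀ n, Fs (n + 1) = Fs n ∘ f (n + 1)

/-- (Fs n) is an escaping sequence: for some w ∈ ℍ the orbit (Fs n w) does not
accumulate in ℍ. -/
def Escaping (Fs : ℕ → MoebMap) : Prop :=
  ∃ w : ℂ, w ∈ UHP ∧
    ¬ ∃ z : ℂ, z ∈ UHP ∧ MapClusterPt z atTop fun n => toC (Fs n (OnePoint.some w))

/-- (Fs n) is an escaping sequence converging ideally to the point p of ℝ̄,
i.e. Fs n w → p in the chordal metric. -/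
def ConvergesIdeallyTo (Fs : ℕ → MoebMap) (p : CHat) : Prop :=
  Escaping Fs ∧ p ∈ RExt ∧
    ∃ w : ℂ, w ∈ UHP ∧
      Tendsto (fun n => chordal (Fs n (OnePoint.some w)) p) atTop (nhds 0)

/-- A discrete subset of (𝓜, χ₀). -/
def IsDiscreteSet (S : Set MoebMap) : Prop :=
  ∀ f ∈ S, ∃ ε : ℝ, 0 < ε ∧ ∀ g ∈ S, g ≠ f → ε ≤ mDist g f

/-- S is a group of Möbius maps. -/
def IsGroupOn (S : Set MoebMap) : Prop :=
  id ∈ S ∧ (∀ f ∈ S, ∀ g ∈ S, f ∘ g ∈ S) ∧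
    ∀ f ∈ S, ∃ g ∈ S, f ∘ g = id ∧ g ∘ f = id

/-- S is a cocompact Fuchsian group: a discrete group of Möbius transformations
such that ℍ/S is compact (equivalently, some compact subset of ℍ has its
S-orbit covering ℍ). -/
def IsCocompactFuchsian (S : Set MoebMap) : Prop :=
  S ⊆ Mob ∧ IsGroupOn S ∧ IsDiscreteSet S ∧
    ∃ D : Set ℂ, IsCompact D ∧ D ⊆ UHP ∧
      ∀ z ∈ UHP, ∃ g ∈ S, ∃ w ∈ D, g (OnePoint.some w) = OnePoint.some z

/-- The set S⁻¹ of inverses of members of S. -/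
def invSet (S : Set MoebMap) : Set MoebMap :=
  {g | ∃ f ∈ S, f ∘ g = id ∧ g ∘ f = id}

/-- The forward limit set Λ⁺(S): accumulation points in ℝ̄ of the orbit of i. -/
def fwdLimitSet (S : Set MoebMap) : Set CHat :=
  {p | p ∈ RExt ∧ ∀ ε : ℝ, 0 < ε →
    ∃ g ∈ S, g (OnePoint.some Complex.I) ≠ p ∧
      chordal (g (OnePoint.some Complex.I)) p < ε}

/-- The backward limit set Λ⁻(S) = Λ⁺(S⁻¹). -/
def bwdLimitSet (S : Set MoebMap) : Set CHat := fwdLimitSet (invSet S)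

/-- S is elementary: it has a finite orbit in ℍ̄. -/
def Elementary (S : Set MoebMap) : Prop :=
  ∃ p ∈ HBar, ((fun g : MoebMap => g p) '' S).Finite

/-- The segment [0,1] of ℝ̄. -/
def unitClosedSeg : Set CHat := {p | ∃ x : ℝ, 0 ≤ x ∧ x ≤ 1 ∧ p = OnePoint.some (x : ℂ)}

/-- The segment (0,1) of ℝ̄. -/
def unitOpenSeg : Set CHat := {p | ∃ x : ℝ, 0 < x ∧ x < 1 ∧ p = OnePoint.some (x : ℂ)}

/-- A closed interval of ℝ̄: a closed arc, neither a singleton nor all of ℝ̄;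
equivalently, a Möbius image of [0,1]. -/
def IsClosedInterval (J : Set CHat) : Prop := ∃ g ∈ Mob, J = g '' unitClosedSeg

/-- An open interval of ℝ̄: a Möbius image of (0,1). -/
def IsOpenInterval (J : Set CHat) : Prop := ∃ g ∈ Mob, J = g '' unitOpenSeg

/-- f maps J strictly inside itself. -/
def StrictlyInside (f : MoebMap) (J : Set CHat) : Prop := f '' J ⊆ J ∧ f '' J ≠ J

/-- 𝓜(J): the Möbius transformations mapping J within itself. -/
def MobOf (J : Set CHat) : Set MoebMap := {f | f ∈ Mob ∧ f '' J ⊆ J}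

/-- S is dense in 𝓜. -/
def DenseInMob (S : Set MoebMap) : Prop :=
  ∀ f ∈ Mob, ∀ ε : ℝ, 0 < ε → ∃ g ∈ S, mDist g f < ε

/-- The Dirichlet region of S centred at w. -/
def DirichletRegion (S : Set MoebMap) (w : ℂ) : Set ℂ :=
  {z | z ∈ UHP ∧ ∀ g ∈ S, g ≠ id → hypDist z w ≤ hypDist z (toC (g (OnePoint.some w)))}

/-- The (open) horodisc based at x ∈ ℝ̄ whose boundary horocycle passes
through w ∈ ℍ. -/
def horodisc (x : CHat) (w : ℂ) : Set ℂ :=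
  match x with
  | OnePoint.infty => {z | w.im < z.im}
  | OnePoint.some p =>
      {z | ‖
            (z - (p + Complex.I * ((‖w - p‖ ^ 2 / (2 * w.im) : ℝ) : ℂ)))‖ <
          ‖w - p‖ ^ 2 / (2 * w.im)}

/-- The forward horocyclic limit set Λ_h⁺(S): points x of Λ⁺(S) such that every
orbit meets every horodisc based at x. -/
def horocyclicFwdLimitSet (S : Set MoebMap) : Set CHat :=
  {x | x ∈ fwdLimitSet S ∧ ∀ w ∈ UHP, ∀ u ∈ UHP,
    ∃ g ∈ S, toC (g (OnePoint.some w)) ∈ horodisc x u}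

/-- The end points of an interval J of ℝ̄ (its boundary within ℝ̄). -/
def endpointsOf (J : Set CHat) : Set CHat := {p | p ∈ J ∧ p ∈ closure (RExt \ J)}

/-- S is finitely generated. -/
def FinGen (S : Set MoebMap) : Prop :=
  ∃ F : Set MoebMap, F.Finite ∧ F.Nonempty ∧ S = semigroupGen F

/-- S is exceptional: S ⊆ 𝓜(J) for a closed interval J, the members of S fixing
J setwise form a nontrivial discrete group, and some member of S outside this
group fixes an end point of J. -/
def Exceptional (S : Set MoebMap) : Prop :=
  ∃ J : Set CHat, IsClosedInterval J ∧ (∀ f ∈ S, f '' J ⊆ J) ∧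
    (∃ g ∈ {g ∈ S | g '' J = J}, g ≠ id) ∧
    IsGroupOn {g ∈ S | g '' J = J} ∧ IsDiscreteSet {g ∈ S | g '' J = J} ∧
    ∃ f ∈ S, f '' J ≠ J ∧ ∃ p ∈ endpointsOf J, f p = p

/-- f is elliptic: a nonidentity map fixing a point of ℍ. -/
def Elliptic (f : MoebMap) : Prop :=
  f ≠ id ∧ ∃ z : ℂ, z ∈ UHP ∧ f (OnePoint.some z) = OnePoint.some z

/-- f is parabolic: a nonidentity map whose only fixed point lies on ℝ̄. -/
def Parabolic (f : MoebMap) : Prop :=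
  f ≠ id ∧ ∃ p ∈ RExt, {q : CHat | f q = q} = {p}

/-- α and β are the attracting resp. repelling fixed points of the hyperbolic
map f: both lie on ℝ̄, and iterates of f attract everything except β to α. -/
def HypPair (f : MoebMap) (α β : CHat) : Prop :=
  α ≠ β ∧ α ∈ RExt ∧ β ∈ RExt ∧ f α = α ∧ f β = β ∧
    ∀ p : CHat, p ≠ β → Tendsto (fun n => chordal (f^[n] p) α) atTop (nhds 0)

/-- f is hyperbolic. -/
def Hyperbolic (f : MoebMap) : Prop := ∃ α β : CHat, HypPair f α β

/-- Difference of two points of ℝ̄ (with the usual conventions about ∞, for use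
in the cross-ratio: any factor involving ∞ is replaced by 1). -/
def dR : CHat → CHat → ℝ
  | OnePoint.some x, OnePoint.some y => x.re - y.re
  | _, _ => 1

/-- The cross ratio C(f,g) = (αf−αg)(βf−βg)/((αf−βg)(βf−αg)). -/
def crossC (αf αg βf βg : CHat) : ℝ :=
  (dR αf αg * dR βf βg) / (dR αf βg * dR βf αg)

/-- tr[f,g]: the absolute trace of the commutator F G F⁻¹ G⁻¹ of normalized
(det = 1) matrix representatives. -/
def trComm (a b c d a' b' c' d' : ℝ) : ℝ :=
  |Matrix.trace (!![a, b; c, d] * !![a', b'; c', d'] *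
    !![d, -b; -c, a] * !![d', -b'; -c', a'])|

/-- f and g (parabolic or hyperbolic, with no common fixed point, with
attracting fixed points αf, αg) are antiparallel: neither closed interval
with end points αf and αg is mapped strictly inside itself by both f and g. -/
def Antiparallel (f g : MoebMap) (αf αg : CHat) : Prop :=
  ({p : CHat | f p = p} ∩ {p : CHat | g p = p} = ∅) ∧
    ∀ J : Set CHat, IsClosedInterval J → endpointsOf J = {αf, αg} →
      ¬ (StrictlyInside f J ∧ StrictlyInside g J)

/-- G is a Schottky group of rank two. -/
def SchottkyRank2 (G : Set MoebMap) : Prop :=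
  ∃ p ∈ Mob, ∃ q ∈ Mob, ∃ A B C D : Set CHat,
    IsOpenInterval A ∧ IsOpenInterval B ∧ IsOpenInterval C ∧ IsOpenInterval D ∧
    Disjoint A B ∧ Disjoint A C ∧ Disjoint A D ∧
    Disjoint B C ∧ Disjoint B D ∧ Disjoint C D ∧
    p '' (RExt \ closure A) ⊆ B ∧ q '' (RExt \ closure C) ⊆ D ∧
    G = groupGen {p, q}

/-- S is semidiscrete and inverse free. -/
def SDIF (S : Set MoebMap) : Prop := Semidiscrete S ∧ InverseFree S


/-! ### Auxiliary lemmas -/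

lemma mobius_some (a b c d : ℝ) (z : ℂ) : mobiusFun a b c d (OnePoint.some z) =
    if (c : ℂ) * z + (d : ℂ) = 0 then OnePoint.infty
      else OnePoint.some (((a : ℂ) * z + (b : ℂ)) / ((c : ℂ) * z + (d : ℂ))) := rfl

lemma mobius_infty (a b c d : ℝ) : mobiusFun a b c d OnePoint.infty =
    if c = 0 then OnePoint.infty else OnePoint.some ((a : ℂ) / (c : ℂ)) := rfl

lemma chordal_self (p : CHat) : chordal p p = 0 := by
  cases p with
  | none => rfl
  | some z => simp [chordal]

lemma chordal_le_two (p q : CHat) : chordal p q ≤ 2 := by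
  have key : ∀ z : ℂ, 1 ≤ Real.sqrt (1 + ‖z‖ ^ 2) := by
    intro z
    have h := Real.sqrt_le_sqrt (show (1:ℝ) ≤ 1 + ‖z‖ ^ 2 by nlinarith [sq_nonneg (‖z‖)])
    simpa using h
  cases p with
  | none => cases q with
    | none => norm_num [chordal]
    | some w =>
      show 2 / Real.sqrt (1 + ‖w‖ ^ 2) ≤ 2
      rw [div_le_iff₀ (by positivity)]
      nlinarith [key w]
  | some z => cases q with
    | none =>
      show 2 / Real.sqrt (1 + ‖z‖ ^ 2) ≤ 2
      rw [div_le_iff₀ (by positivity)]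
      nlinarith [key z]
    | some w =>
      show 2 * ‖z - w‖ / _ ≤ 2
      have h2 : ‖z - w‖ ≤ ‖z‖ + ‖w‖ := by
          exact norm_sub_le z w
      have h1 : ‖z - w‖ ≤ Real.sqrt (1 + ‖z‖ ^ 2) * Real.sqrt (1 + ‖w‖ ^ 2) := by
        rw [← Real.sqrt_mul (by positivity)]
        have h3 : ‖z‖ + ‖w‖ ≤ Real.sqrt ((1 + ‖z‖ ^ 2) * (1 + ‖w‖ ^ 2)) := by
          rw [show ‖z‖ + ‖w‖ = Real.sqrt ((‖z‖ + ‖w‖)^2) by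
            rw [Real.sqrt_sq (by positivity)]]
          apply Real.sqrt_le_sqrt
          nlinarith [sq_nonneg (1 - ‖z‖ * ‖w‖), norm_nonneg z, norm_nonneg w]
        linarith
      rw [div_le_iff₀ (by positivity)]
      nlinarith [key z, key w, Real.sqrt_nonneg (1 + ‖z‖ ^ 2), Real.sqrt_nonneg (1 + ‖w‖ ^ 2)]

lemma chordal_le_mDist (f : MoebMap) (z : CHat) : chordal (f z) z ≤ mDist f id := by
  have hb : BddAbove (Set.range fun z : CHat => chordal (f z) (id z)) := by
    refine ⟨2, ?_⟩
    rintro x ⟨w, rfl⟩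
    exact chordal_le_two _ _
  exact le_ciSup hb z

lemma sdif_of_displacement (F : Set MoebMap) (z₀ : CHat) (ε : ℝ) (hε : 0 < ε)
    (hdisp : ∀ W, GenBy F W → ε ≤ chordal (W z₀) z₀) :
    SDIF (semigroupGen F) := by
  constructor
  · intro hcl
    obtain ⟨f, hf, -, hlt⟩ := hcl ε hε
    have h2 := (hdisp f hf).trans (chordal_le_mDist f z₀)
    linarith
  · intro f hf g hg heq
    have h1 := hdisp (f ∘ g) (GenBy.comp hf hg)
    rw [heq] at h1
    have h0 : chordal (id z₀) z₀ = 0 := chordal_self z₀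
    rw [h0] at h1
    linarith

lemma mobius_id {e : ℝ} (he : e ≠ 0) : mobiusFun e 0 0 e = id := by
  funext z
  cases z with
  | none =>
    show mobiusFun e 0 0 e OnePoint.infty = OnePoint.infty
    rw [mobius_infty, if_pos rfl]
  | some z =>
    show mobiusFun e 0 0 e (OnePoint.some z) = OnePoint.some z
    have hez : (e:ℂ) ≠ 0 := by exact_mod_cast he
    rw [mobius_some, if_neg (by simpa using hez)]
    congr 1
    push_cast
    simp only [mul_zero, zero_mul, add_zero, zero_add]; exact mul_div_cancel_left₀ _ hez

lemma mobius_comp (a b c d a' b' c' d' : ℝ) (h' : a'*d' - b'*c' ≠ 0) :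
    mobiusFun a b c d ∘ mobiusFun a' b' c' d' =
      mobiusFun (a*a'+b*c') (a*b'+b*d') (c*a'+d*c') (c*b'+d*d') := by
  have hdet' : ((a':ℂ)*d' - b'*c') ≠ 0 := by
    exact_mod_cast fun hh => h' (by exact_mod_cast hh)
  funext z
  cases z with
  | none =>
    show mobiusFun a b c d (mobiusFun a' b' c' d' OnePoint.infty) =
      mobiusFun (a*a'+b*c') (a*b'+b*d') (c*a'+d*c') (c*b'+d*d') OnePoint.infty
    rw [mobius_infty, mobius_infty]
    by_cases hc' : c' = 0
    · have ha' : (a':ℝ) ≠ 0 := fun h0 => h' (by rw [h0, hc']; ring)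
      rw [if_pos hc', mobius_infty]
      by_cases hc : c = 0
      · rw [if_pos hc, if_pos (by rw [hc, hc']; ring)]
      · have hca : c*a' + d*c' ≠ 0 := by rw [hc']; simpa using mul_ne_zero hc ha'
        rw [if_neg hc, if_neg hca]
        congr 1
        push_cast
        rw [div_eq_div_iff (by exact_mod_cast hc) (by exact_mod_cast hca)]
        push_cast [hc']
        ring
    · rw [if_neg hc', mobius_some]
      by_cases hden : (c:ℂ) * ((a':ℂ)/(c':ℂ)) + d = 0
      · have hc'c : (c':ℂ) ≠ 0 := by exact_mod_cast hc'
        have hc'' : c*a' + d*c' = 0 := by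
          field_simp at hden
          have h0 : ((c*a'+d*c' : ℝ):ℂ) = 0 := by push_cast; linear_combination hden
          exact_mod_cast h0
        rw [if_pos hden, if_pos (by exact_mod_cast hc'')]
      · have hc'c : (c':ℂ) ≠ 0 := by exact_mod_cast hc'
        have hc'' : ¬ (c*a' + d*c' = 0) := by
          intro h0
          apply hden
          field_simp
          have h0' : ((c*a'+d*c' : ℝ):ℂ) = 0 := by exact_mod_cast h0
          push_cast at h0'; linear_combination h0'
        rw [if_neg hden, if_neg hc'']
        congr 1
        have hcc : ((c:ℂ)*a' + d*c') ≠ 0 := by exact_mod_cast hc''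
        push_cast
        field_simp
  | some z =>
    show mobiusFun a b c d (mobiusFun a' b' c' d' (OnePoint.some z)) =
      mobiusFun (a*a'+b*c') (a*b'+b*d') (c*a'+d*c') (c*b'+d*d') (OnePoint.some z)
    rw [mobius_some, mobius_some]
    by_cases hden' : (c':ℂ) * z + d' = 0
    · -- inner pole
      have hnum' : (a':ℂ) * z + b' ≠ 0 := by
        intro h0
        have h1 : ((a':ℂ)*d' - b'*c') * z = 0 := by linear_combination (d':ℂ) * h0 - (b':ℂ) * hden'
        rcases mul_eq_zero.mp h1 with h2 | h2
        · exact hdet' h2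
        · rw [h2, mul_zero, zero_add] at h0 hden'
          exact hdet' (by rw [h0, hden']; ring)
      have hcomb : ((c*a'+d*c' : ℝ):ℂ) * z + ((c*b'+d*d' : ℝ):ℂ) = c * ((a':ℂ)*z + b') := by
        push_cast
        linear_combination (d:ℂ) * hden'
      rw [if_pos hden', mobius_infty]
      by_cases hc : c = 0
      · rw [if_pos hc, if_pos (by rw [hcomb, hc]; push_cast; ring)]
      · have hcz : (c:ℂ) ≠ 0 := by exact_mod_cast hc
        have hne : ((c*a'+d*c' : ℝ):ℂ) * z + ((c*b'+d*d' : ℝ):ℂ) ≠ 0 := by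
          rw [hcomb]; exact mul_ne_zero hcz hnum'
        rw [if_neg hc, if_neg hne]
        congr 1
        have hnum2 : ((a*a'+b*c' : ℝ):ℂ) * z + ((a*b'+b*d' : ℝ):ℂ) = a * ((a':ℂ)*z + b') := by
          push_cast
          linear_combination (b:ℂ) * hden'
        rw [hnum2, hcomb, mul_comm (c:ℂ), mul_comm (a:ℂ), mul_div_mul_left _ _ hnum']
    · -- inner fine
      rw [if_neg hden', mobius_some]
      set w := ((a':ℂ) * z + b') / ((c':ℂ) * z + d') with hw
      have hcomb : (c:ℂ) * w + d = (((c*a'+d*c' : ℝ):ℂ) * z + ((c*b'+d*d' : ℝ):ℂ)) / ((c':ℂ)*z+d') := by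
        rw [hw, eq_div_iff hden', add_mul, mul_assoc, div_mul_cancel₀ _ hden']; push_cast; ring
      by_cases hP : ((c*a'+d*c' : ℝ):ℂ) * z + ((c*b'+d*d' : ℝ):ℂ) = 0
      · rw [if_pos (by rw [hcomb, hP, zero_div]), if_pos hP]
      · have hne : (c:ℂ) * w + d ≠ 0 := by
          rw [hcomb]
          exact div_ne_zero hP hden'
        rw [if_neg hne, if_neg hP]
        congr 1
        have hnum2 : (a:ℂ) * w + b = (((a*a'+b*c' : ℝ):ℂ) * z + ((a*b'+b*d' : ℝ):ℂ)) / ((c':ℂ)*z+d') := by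
          rw [hw, eq_div_iff hden', add_mul, mul_assoc, div_mul_cancel₀ _ hden']; push_cast; ring
        rw [hnum2, hcomb, div_div_div_cancel_right₀ _ _ _]
        exact hden'

/-- The map z ↦ -z on the sphere. -/
def negM : MoebMap := fun q =>
  match q with
  | OnePoint.infty => OnePoint.infty
  | OnePoint.some z => OnePoint.some (-z)

lemma negM_negM (q : CHat) : negM (negM q) = q := by
  cases q with
  | none => rfl
  | some z =>
    show OnePoint.some (-(-z)) = OnePoint.some z
    rw [neg_neg]

lemma chordal_negM (p q : CHat) : chordal (negM p) (negM q) = chordal p q := by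
  cases p with
  | none => cases q with
    | none => rfl
    | some w => show chordal OnePoint.infty (OnePoint.some (-w)) = _; simp [chordal]
  | some z => cases q with
    | none => show chordal (OnePoint.some (-z)) OnePoint.infty = _; simp [chordal]
    | some w =>
      show chordal (OnePoint.some (-z)) (OnePoint.some (-w)) = chordal (OnePoint.some z) (OnePoint.some w)
      simp only [chordal]
      rw [show -z - -w = -(z - w) by ring, norm_neg, norm_neg,
        norm_neg]

lemma mobius_negM (a b c d : ℝ) (q : CHat) :
    negM (mobiusFun a b c d (negM q)) = mobiusFun a (-b) (-c) d q := by
  cases q with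
  | none =>
    show negM (mobiusFun a b c d OnePoint.infty) = mobiusFun a (-b) (-c) d OnePoint.infty
    rw [mobius_infty, mobius_infty]
    by_cases hc : c = 0
    · rw [if_pos hc, if_pos (by rw [hc]; ring)]
      rfl
    · rw [if_neg hc, if_neg (by simpa using hc)]
      show OnePoint.some (-((a:ℂ)/c)) = _
      congr 1
      push_cast
      ring
  | some z =>
    show negM (mobiusFun a b c d (OnePoint.some (-z))) = mobiusFun a (-b) (-c) d (OnePoint.some z)
    rw [mobius_some, mobius_some]
    by_cases hden : (c:ℂ) * (-z) + d = 0
    · rw [if_pos hden, if_pos (by push_cast; linear_combination hden)]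
      rfl
    · have hden2 : ((-c:ℝ):ℂ) * z + d ≠ 0 := by
        intro h0
        apply hden
        push_cast at h0 ⊢
        linear_combination h0
      rw [if_neg hden, if_neg hden2]
      show OnePoint.some (-(((a:ℂ) * (-z) + b) / ((c:ℂ) * (-z) + d))) =
        OnePoint.some ((((a:ℝ):ℂ) * z + ((-b:ℝ):ℂ)) / (((-c:ℝ):ℂ) * z + ((d:ℝ):ℂ)))
      congr 1
      rw [← neg_div]
      rw [div_eq_div_iff hden hden2]
      push_cast
      ring

lemma genby_negM {f1 f2 W : MoebMap} (h : GenBy {f1, f2} W) :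
    GenBy {fun q => negM (f1 (negM q)), fun q => negM (f2 (negM q))} (fun q => negM (W (negM q))) := by
  induction h with
  | base hf =>
    rcases hf with rfl | rfl
    · exact GenBy.base (Set.mem_insert _ _)
    · exact GenBy.base (Set.mem_insert_of_mem _ rfl)
  | @comp f g hf hg ihf ihg =>
    have heq : (fun q => negM ((f ∘ g) (negM q))) =
        (fun q => negM (f (negM q))) ∘ (fun q => negM (g (negM q))) := by
      funext q
      show negM (f (g (negM q))) = negM (f (negM (negM (g (negM q)))))
      rw [negM_negM]
    rw [heq]
    exact GenBy.comp ihf ihg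

lemma sqrt_form (A B : ℝ) (hA : 0 ≤ A) (hB : 0 < B) :
    2 * Real.sqrt A / Real.sqrt B = Real.sqrt (4 * A / B) := by
  rw [Real.sqrt_div (by linarith) B, show (4:ℝ) * A = 2^2 * A by ring,
    Real.sqrt_mul (by norm_num), Real.sqrt_sq (by norm_num)]


lemma abs_mulI_add (x y : ℝ) : ‖(y:ℂ) * Complex.I + (x:ℂ)‖ = Real.sqrt (x^2 + y^2) := by
  rw [show (y:ℂ) * Complex.I + (x:ℂ) = (x:ℂ) + (y:ℂ) * Complex.I by ring, Complex.norm_add_mul_I]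

lemma chordal_mobius_I {a b c d : ℝ} (hdet : a*d - b*c = 1) (hd : 0 < d) :
    chordal (mobiusFun a b c d (OnePoint.some Complex.I)) (OnePoint.some Complex.I) =
      Real.sqrt (2 * ((b+c)^2 + (a-d)^2) / (((b+c)^2 + (a-d)^2) + 2)) := by
  set P := (b+c)^2 + (a-d)^2 with hP
  have hQQ : 0 < c^2 + d^2 := by positivity
  have hden : (c:ℂ) * Complex.I + d ≠ 0 := by
    intro h0
    have hre := congrArg Complex.re h0
    simp [Complex.add_re, Complex.mul_re] at hre
    linarith
  rw [mobius_some, if_neg hden]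
  show 2 * ‖((a:ℂ)*Complex.I + b)/((c:ℂ)*Complex.I + d) - Complex.I‖ /
      (Real.sqrt (1 + ‖((a:ℂ)*Complex.I + b)/((c:ℂ)*Complex.I + d)‖ ^2) *
       Real.sqrt (1 + ‖Complex.I‖ ^2)) = _
  have habsden : ‖(c:ℂ)*Complex.I + d‖ = Real.sqrt (d^2 + c^2) := abs_mulI_add d c
  have habsnum : ‖(a:ℂ)*Complex.I + b‖ = Real.sqrt (b^2 + a^2) := abs_mulI_add b a
  have habs1 : ‖((a:ℂ)*Complex.I + b)/((c:ℂ)*Complex.I + d) - Complex.I‖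
      = Real.sqrt P / Real.sqrt (c^2 + d^2) := by
    have h1 : ((a:ℂ)*Complex.I + b)/((c:ℂ)*Complex.I + d) - Complex.I
        = (((a-d:ℝ):ℂ) * Complex.I + ((b+c:ℝ):ℂ)) / ((c:ℂ)*Complex.I + d) := by
      rw [eq_div_iff hden, sub_mul, div_mul_cancel₀ _ hden]
      push_cast
      linear_combination (-(c:ℂ)) * Complex.I_sq
    rw [h1, norm_div, abs_mulI_add]
    congr 2
    rw [show d^2 + c^2 = c^2 + d^2 by ring] at habsden
    exact habsden.symm ▸ habsden
  have habs2 : 1 + ‖((a:ℂ)*Complex.I + b)/((c:ℂ)*Complex.I + d)‖^2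
      = (P + 2)/(c^2+d^2) := by
    rw [norm_div, div_pow, habsden, habsnum, Real.sq_sqrt (by positivity),
      Real.sq_sqrt (by positivity)]
    rw [show d^2 + c^2 = c^2 + d^2 by ring]
    field_simp
    linear_combination 2*hdet
  rw [habs1, habs2, Complex.norm_I, Real.sqrt_div (by positivity) (c^2+d^2)]
  norm_num
  have hsQ : (0:ℝ) < Real.sqrt (c^2+d^2) := Real.sqrt_pos.mpr hQQ
  have h3 : 2 * (Real.sqrt P / Real.sqrt (c^2+d^2)) /
      (Real.sqrt (P+2) / Real.sqrt (c^2+d^2) * Real.sqrt 2)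
      = 2 * Real.sqrt P / (Real.sqrt (P+2) * Real.sqrt 2) := by
    field_simp
  have h4 : Real.sqrt (P+2) * Real.sqrt 2 = Real.sqrt ((P+2)*2) :=
    (Real.sqrt_mul (by positivity) 2).symm
  have h5 : (4:ℝ) * P / ((P+2)*2) = 2 * P / (P+2) := by
    rw [div_eq_div_iff (by positivity) (by positivity)]
    ring
  rw [h3, h4, sqrt_form _ _ (by positivity) (by positivity), h5]


lemma matrix_invariant {lam mu : ℝ} (hl : 0 < lam) (hm : 0 < mu) :
    ∀ W, GenBy {mobiusFun 1 lam 0 1, mobiusFun 1 0 mu 1} W →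
      ∃ a b c d : ℝ, (a*d - b*c = 1 ∧ 1 ≤ a ∧ 1 ≤ d ∧ 0 ≤ b ∧ 0 ≤ c ∧ min lam mu ≤ b + c) ∧
        W = mobiusFun a b c d := by
  intro W hW
  induction hW with
  | base hf =>
    rcases hf with rfl | rfl
    · refine ⟨1, lam, 0, 1, ⟨by ring, le_refl 1, le_refl 1, le_of_lt hl, le_refl 0, ?_⟩, rfl⟩
      simpa using min_le_left lam mu
    · refine ⟨1, 0, mu, 1, ⟨by ring, le_refl 1, le_refl 1, le_refl 0, le_of_lt hm, ?_⟩, rfl⟩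
      simpa using min_le_right lam mu
  | comp hf hg ihf ihg =>
    obtain ⟨a,b,c,d,⟨hdet,ha,hd,hb,hc,hbc⟩,rfl⟩ := ihf
    obtain ⟨a',b',c',d',⟨hdet',ha',hd',hb',hc',hbc'⟩,rfl⟩ := ihg
    have e1 : (0:ℝ) ≤ (a-1)*(a'-1) := mul_nonneg (by linarith) (by linarith)
    have e2 : (0:ℝ) ≤ (d-1)*(d'-1) := mul_nonneg (by linarith) (by linarith)
    have e3 : (0:ℝ) ≤ b*c' := mul_nonneg hb hc'
    have e4 : (0:ℝ) ≤ c*b' := mul_nonneg hc hb'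
    have e5 : (0:ℝ) ≤ (a-1)*b' := mul_nonneg (by linarith) hb'
    have e6 : (0:ℝ) ≤ b*(d'-1) := mul_nonneg hb (by linarith)
    have e7 : (0:ℝ) ≤ c*(a'-1) := mul_nonneg hc (by linarith)
    have e8 : (0:ℝ) ≤ (d-1)*c' := mul_nonneg (by linarith) hc'
    refine ⟨a*a'+b*c', a*b'+b*d', c*a'+d*c', c*b'+d*d', ⟨?_,?_,?_,?_,?_,?_⟩, ?_⟩
    · linear_combination (a'*d' - b'*c') * hdet + hdet'
    · nlinarith
    · nlinarith
    · nlinarith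
    · nlinarith
    · nlinarith
    · exact mobius_comp a b c d a' b' c' d' (ne_of_eq_of_ne hdet' one_ne_zero)

lemma disp_pos {lam mu : ℝ} (hl : 0 < lam) (hm : 0 < mu) :
    ∀ W, GenBy {mobiusFun 1 lam 0 1, mobiusFun 1 0 mu 1} W →
      Real.sqrt ((min lam mu)^2 / ((min lam mu)^2 + 1)) ≤
        chordal (W (OnePoint.some Complex.I)) (OnePoint.some Complex.I) := by
  set m := min lam mu with hm0
  have hmpos : 0 < m := lt_min hl hm
  intro W hW
  obtain ⟨a, b, c, d, ⟨hdet, ha, hd, hb, hc, hbc⟩, rfl⟩ := matrix_invariant hl hm W hW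
  rw [chordal_mobius_I hdet (by linarith)]
  apply Real.sqrt_le_sqrt
  rw [div_le_div_iff₀ (by positivity) (by positivity)]
  have hPm : m^2 ≤ (b+c)^2 + (a-d)^2 := by nlinarith
  nlinarith [sq_nonneg (a-d), hPm, sq_nonneg m]


/-- Invariant point set for the case `lam > 0, mu < 0, lam*mu ≤ -4`. -/
def goodPt (lam : ℝ) (q : CHat) : Prop :=
  q = OnePoint.infty ∨ ∃ x : ℝ, q = OnePoint.some (x:ℂ) ∧
    (lam/2 ≤ x ∨ (-(lam/2) ≤ x ∧ x ≤ 0))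

lemma disp_neg4 {lam mu : ℝ} (hl : 0 < lam) (hmu : mu < 0) (hlm : lam * mu ≤ -4) :
    ∀ W, GenBy {mobiusFun 1 lam 0 1, mobiusFun 1 0 mu 1} W →
      Real.sqrt (4*lam^2 / ((1+lam^2)*(lam^2+4))) ≤
        chordal (W (OnePoint.some ((-lam : ℝ):ℂ))) (OnePoint.some ((-lam : ℝ):ℂ)) := by
  have hcoef : 1 + lam*mu/2 ≤ -1 := by nlinarith
  have hA : ∀ x : ℝ, mobiusFun 1 lam 0 1 (OnePoint.some (x:ℂ)) =
      OnePoint.some ((x + lam : ℝ):ℂ) := by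
    intro x
    rw [mobius_some, if_neg (by norm_num)]
    congr 1
    push_cast
    ring
  have hB : ∀ x : ℝ, mu*x + 1 ≠ 0 → mobiusFun 1 0 mu 1 (OnePoint.some (x:ℂ)) =
      OnePoint.some ((x / (mu*x+1) : ℝ):ℂ) := by
    intro x hx
    have hxC : (mu:ℂ) * (x:ℂ) + 1 ≠ 0 := by
      intro h0
      apply hx
      exact_mod_cast h0
    rw [mobius_some]
    push_cast
    rw [if_neg hxC]
    congr 1
    ring
  have hBpole : ∀ x : ℝ, mu*x + 1 = 0 → mobiusFun 1 0 mu 1 (OnePoint.some (x:ℂ)) =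
      OnePoint.infty := by
    intro x hx
    have hxC : (mu:ℂ) * (x:ℂ) + 1 = 0 := by exact_mod_cast hx
    rw [mobius_some]
    push_cast
    rw [if_pos hxC]
  have hinv : ∀ W, GenBy {mobiusFun 1 lam 0 1, mobiusFun 1 0 mu 1} W →
      ∀ q : CHat, (goodPt lam q ∨ q = OnePoint.some ((-lam : ℝ):ℂ)) → goodPt lam (W q) := by
    intro W hW
    induction hW with
    | base hf =>
      rcases hf with rfl | rfl
      · -- the map z ↦ z + lam
        rintro q (hq | rfl)
        · rcases hq with rfl | ⟨x, rfl, hx⟩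
          · left
            rw [mobius_infty, if_pos rfl]
          · right
            refine ⟨x + lam, hA x, Or.inl ?_⟩
            rcases hx with hx | ⟨hx1, hx2⟩ <;> linarith
        · right
          refine ⟨-lam + lam, hA (-lam), Or.inr ⟨by linarith, by linarith⟩⟩
      · -- the map z ↦ z/(mu z + 1)
        rintro q (hq | rfl)
        · rcases hq with rfl | ⟨x, rfl, hx⟩
          · right
            refine ⟨1/mu, ?_, Or.inr ⟨?_, ?_⟩⟩
            · rw [mobius_infty, if_neg (ne_of_lt hmu)]
              congr 1
              push_cast
              ring
            · rw [le_div_iff_of_neg hmu]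
              nlinarith
            · exact le_of_lt (div_neg_of_pos_of_neg one_pos hmu)
          · by_cases hden : mu*x + 1 = 0
            · left
              exact hBpole x hden
            · right
              refine ⟨x/(mu*x+1), hB x hden, Or.inr ?_⟩
              rcases hx with hx | ⟨hx1, hx2⟩
              · have hD : mu*x + 1 < 0 := by nlinarith
                constructor
                · rw [le_div_iff_of_neg hD]
                  nlinarith [mul_nonneg (show (0:ℝ) ≤ x - lam/2 by linarith)
                    (show (0:ℝ) ≤ -(1+lam*mu/2) by linarith)]
                · exact le_of_lt (div_neg_of_pos_of_neg (by linarith) hD)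
              · have hD : 0 < mu*x + 1 := by nlinarith
                constructor
                · rw [le_div_iff₀ hD]
                  nlinarith [mul_nonneg (show (0:ℝ) ≤ -x by linarith)
                    (show (0:ℝ) ≤ -(1+lam*mu/2) by linarith)]
                · exact div_nonpos_of_nonpos_of_nonneg hx2 (le_of_lt hD)
        · by_cases hden : mu*(-lam) + 1 = 0
          · left
            exact hBpole (-lam) hden
          · right
            have hD : 0 < mu*(-lam) + 1 := by nlinarith
            refine ⟨(-lam)/(mu*(-lam)+1), hB (-lam) hden, Or.inr ⟨?_, ?_⟩⟩
            · rw [le_div_iff₀ hD]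
              nlinarith
            · exact le_of_lt (div_neg_of_neg_of_pos (by linarith) hD)
    | comp hf hg ihf ihg =>
      intro q hq
      exact ihf _ (Or.inl (ihg q hq))
  intro W hW
  have hgood := hinv W hW _ (Or.inr rfl)
  have habsl : ‖((-lam : ℝ):ℂ)‖ = lam := by
    rw [Complex.norm_real, Real.norm_eq_abs, abs_of_neg (by linarith)]
    ring
  rcases hgood with hq | ⟨x, hq, hx⟩
  · -- W p0 = infty
    rw [hq]
    show Real.sqrt _ ≤ 2 / Real.sqrt (1 + ‖((-lam : ℝ):ℂ)‖ ^ 2)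
    rw [habsl]
    have h1 : 2 / Real.sqrt (1 + lam^2) = 2 * Real.sqrt 1 / Real.sqrt (1 + lam^2) := by
      norm_num
    rw [h1, sqrt_form 1 (1+lam^2) (by norm_num) (by positivity)]
    apply Real.sqrt_le_sqrt
    rw [div_le_div_iff₀ (by positivity) (by positivity)]
    nlinarith [sq_nonneg lam, sq_nonneg (lam*lam)]
  · -- W p0 = some x with x ≥ -lam/2
    have hxge : -(lam/2) ≤ x := by
      rcases hx with hx | ⟨hx1, _⟩ <;> linarith
    rw [hq]
    show Real.sqrt _ ≤ 2 * ‖(x:ℂ) - ((-lam : ℝ):ℂ)‖ /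
      (Real.sqrt (1 + ‖(x:ℂ)‖ ^ 2) * Real.sqrt (1 + ‖((-lam : ℝ):ℂ)‖ ^ 2))
    rw [habsl, Complex.norm_real, Real.norm_eq_abs]
    have hd1 : ‖(x:ℂ) - ((-lam : ℝ):ℂ)‖ = |x + lam| := by
      rw [show (x:ℂ) - ((-lam : ℝ):ℂ) = ((x + lam : ℝ):ℂ) by push_cast; ring, Complex.norm_real, Real.norm_eq_abs]
    rw [hd1, sq_abs]
    have hd2 : |x + lam| = Real.sqrt ((x+lam)^2) := (Real.sqrt_sq_eq_abs _).symm
    have hd3 : Real.sqrt (1 + x^2) * Real.sqrt (1 + lam^2) =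
        Real.sqrt ((1+x^2)*(1+lam^2)) := (Real.sqrt_mul (by positivity) _).symm
    rw [hd2, hd3, sqrt_form _ _ (by positivity) (by positivity)]
    apply Real.sqrt_le_sqrt
    rw [div_le_div_iff₀ (by positivity) (by positivity)]
    have core : lam^2*(1+x^2) ≤ (lam^2+4)*(x+lam)^2 := by
      nlinarith [mul_nonneg (show (0:ℝ) ≤ x + lam/2 by linarith)
        (show (0:ℝ) ≤ x + lam*(lam^2+3)/2 by nlinarith [sq_nonneg lam])]
    nlinarith [mul_le_mul_of_nonneg_left core (show (0:ℝ) ≤ 4*(1+lam^2) by positivity)]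


lemma sqrt_eight_le_three : Real.sqrt 8 ≤ 3 := by
  rw [show (3:ℝ) = Real.sqrt 9 by rw [show (9:ℝ) = 3^2 by norm_num, Real.sqrt_sq]; norm_num]
  exact Real.sqrt_le_sqrt (by norm_num)

set_option maxHeartbeats 1600000 in
lemma chordal_pt_le {a b c d η : ℝ} (hη : η ≤ 1/4)
    (ha : |a-1| ≤ η) (hb : |b| ≤ η) (hc : |c| ≤ η) (hd : |d-1| ≤ η) (q : CHat) :
    chordal (mobiusFun a b c d q) q ≤ 12*η := by
  have hη0 : 0 ≤ η := le_trans (abs_nonneg b) hb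
  have ha1 : 3/4 ≤ a := by have := abs_le.mp ha; linarith
  have ha2 : a ≤ 5/4 := by have := abs_le.mp ha; linarith
  have hd1 : 3/4 ≤ d := by have := abs_le.mp hd; linarith
  have hd2 : d ≤ 5/4 := by have := abs_le.mp hd; linarith
  have hb1 : |b| ≤ 1/4 := le_trans hb hη
  have hc1 : |c| ≤ 1/4 := le_trans hc hη
  cases q with
  | none =>
    show chordal (mobiusFun a b c d OnePoint.infty) OnePoint.infty ≤ 12*η
    rw [mobius_infty]
    by_cases hcz : c = 0
    · rw [if_pos hcz, chordal_self]
      positivity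
    · rw [if_neg hcz]
      show 2 / Real.sqrt (1 + ‖(a:ℂ)/(c:ℂ)‖ ^ 2) ≤ 12*η
      have hXv : ‖(a:ℂ)/(c:ℂ)‖ = |a|/|c| := by
        rw [norm_div, Complex.norm_real, Real.norm_eq_abs, Complex.norm_real, Real.norm_eq_abs]
      have hcpos : 0 < |c| := abs_pos.mpr hcz
      have hXpos : 0 < |a|/|c| := div_pos (by rw [abs_of_pos (by linarith)]; linarith) hcpos
      have h1 : |a|/|c| ≤ Real.sqrt (1 + ‖(a:ℂ)/(c:ℂ)‖ ^ 2) := by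
        rw [hXv]
        calc |a|/|c| = Real.sqrt ((|a|/|c|)^2) := (Real.sqrt_sq (le_of_lt hXpos)).symm
        _ ≤ _ := Real.sqrt_le_sqrt (by nlinarith)
      have h2 : 2 / Real.sqrt (1 + ‖(a:ℂ)/(c:ℂ)‖ ^ 2) ≤ 2 / (|a|/|c|) := by
        apply div_le_div_of_nonneg_left (by norm_num) hXpos h1
      refine le_trans h2 ?_
      rw [div_div_eq_mul_div, div_le_iff₀ (by rw [abs_of_pos (by linarith : (0:ℝ) < a)]; linarith)]
      have : 0 < η := lt_of_lt_of_le hcpos hc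
      rw [abs_of_pos (by linarith : (0:ℝ) < a)]
      nlinarith
  | some z =>
    show chordal (mobiusFun a b c d (OnePoint.some z)) (OnePoint.some z) ≤ 12*η
    rw [mobius_some]
    set r := ‖z‖ with hr
    have hr0 : 0 ≤ r := norm_nonneg z
    by_cases hpole : (c:ℂ) * z + d = 0
    · rw [if_pos hpole]
      show 2 / Real.sqrt (1 + ‖z‖ ^ 2) ≤ 12*η
      have hcz : c ≠ 0 := by
        intro h0
        rw [h0] at hpole
        push_cast at hpole
        simp at hpole
        have : (d:ℝ) = 0 := by exact_mod_cast hpole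
        linarith
      have hcpos : 0 < |c| := abs_pos.mpr hcz
      have hη' : 0 < η := lt_of_lt_of_le hcpos hc
      have hzv : z = -((d:ℂ)/(c:ℂ)) := by
        have hccx : (c:ℂ) ≠ 0 := by exact_mod_cast hcz
        field_simp
        linear_combination hpole
      have hrv : r = |d|/|c| := by
        rw [hr, hzv, norm_neg, norm_div, Complex.norm_real, Real.norm_eq_abs, Complex.norm_real, Real.norm_eq_abs]
      have hrbig : 3 ≤ r := by
        rw [hrv, le_div_iff₀ hcpos, abs_of_pos (by linarith : (0:ℝ) < d)]
        nlinarith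
      have h1 : r ≤ Real.sqrt (1 + ‖z‖ ^ 2) := by
        calc r = Real.sqrt (r^2) := (Real.sqrt_sq hr0).symm
        _ ≤ _ := Real.sqrt_le_sqrt (by nlinarith)
      have h2 : 2 / Real.sqrt (1 + ‖z‖ ^ 2) ≤ 2 / r := by
        apply div_le_div_of_nonneg_left (by norm_num) (by linarith) h1
      refine le_trans h2 ?_
      rw [div_le_iff₀ (by linarith : (0:ℝ) < r)]
      have h3 : 3/4 ≤ |c| * r := by
        rw [hrv, mul_div_cancel₀ _ (ne_of_gt hcpos), abs_of_pos (by linarith : (0:ℝ) < d)]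
        linarith
      nlinarith
    · rw [if_neg hpole]
      set u := ((a:ℂ)*z + b)/((c:ℂ)*z + d) with hu
      show 2 * ‖u - z‖ /
        (Real.sqrt (1 + ‖u‖ ^ 2) * Real.sqrt (1 + ‖z‖ ^ 2)) ≤ 12*η
      set v := (c:ℂ)*z + d with hv
      have hvpos : 0 < ‖v‖ := norm_pos_iff.mpr hpole
      set N := ‖(b:ℂ) + ((a-d:ℝ):ℂ)*z - (c:ℂ)*z^2‖ with hN
      have huz : ‖u - z‖ = N / ‖v‖ := by
        rw [← norm_div]
        congr 1
        rw [hu, eq_div_iff hpole, sub_mul, div_mul_cancel₀ _ hpole, hv]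
        push_cast
        ring
      have hW : ‖(a:ℂ)*z+b‖ ^ 2 = ‖u‖ ^2 * ‖v‖ ^ 2 := by
        rw [hu, norm_div, div_pow, div_mul_cancel₀]
        positivity
      have hD : (1+r^2)/8 ≤ ‖v‖ ^2 + ‖(a:ℂ)*z+b‖ ^ 2 := by
        rcases le_or_gt r 1 with hr1 | hr1
        · have htri : |d| - |c| * r ≤ ‖v‖ := by
            have h4 := norm_add_le v (-(c:ℂ)*z)
            have h5 : v + -(c:ℂ)*z = (d:ℂ) := by rw [hv]; ring
            rw [h5] at h4
            have h6 : ‖(-(c:ℂ))*z‖ = |c| * r := by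
              rw [norm_mul, norm_neg, Complex.norm_real, Real.norm_eq_abs, hr]
            rw [Complex.norm_real, Real.norm_eq_abs] at h4
            linarith [h4, h6 ▸ le_refl (‖(-(c:ℂ))*z‖)]
          have h7 : 1/2 ≤ ‖v‖ := by
            have : |c| * r ≤ 1/4 := by nlinarith [abs_nonneg c]
            rw [abs_of_pos (by linarith : (0:ℝ) < d)] at htri
            linarith
          nlinarith [norm_nonneg ((a:ℂ)*z+b), sq_nonneg (‖(a:ℂ)*z+b‖)]
        · have htri : |a| * r - |b| ≤ ‖(a:ℂ)*z+b‖ := by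
            have h4 := norm_add_le ((a:ℂ)*z + b) (-(b:ℂ))
            have h5 : (a:ℂ)*z + b + -(b:ℂ) = (a:ℂ)*z := by ring
            rw [h5] at h4
            rw [norm_mul, Complex.norm_real, Real.norm_eq_abs, ← hr] at h4
            have h6 : ‖-(b:ℂ)‖ = |b| := by
              rw [norm_neg, Complex.norm_real, Real.norm_eq_abs]
            rw [h6] at h4
            linarith
          have h7 : r/2 ≤ ‖(a:ℂ)*z+b‖ := by
            rw [abs_of_pos (by linarith : (0:ℝ) < a)] at htri
            nlinarith [abs_nonneg b]
          nlinarith [norm_nonneg v, sq_nonneg (‖v‖), sq_nonneg (r-1)]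
      have hNle : N ≤ 2*η*(1+r^2) := by
        have t1 := norm_add_le ((b:ℂ) + ((a-d:ℝ):ℂ)*z) (-(c:ℂ)*z^2)
        have t2 := norm_add_le ((b:ℂ)) (((a-d:ℝ):ℂ)*z)
        have e1 : (b:ℂ) + ((a-d:ℝ):ℂ)*z - (c:ℂ)*z^2 = ((b:ℂ) + ((a-d:ℝ):ℂ)*z) + -(c:ℂ)*z^2 := by
          ring
        rw [hN, e1]
        have e2 : ‖-(c:ℂ)*z^2‖ = |c| * r^2 := by
          rw [norm_mul, norm_neg, Complex.norm_real, Real.norm_eq_abs, norm_pow, hr]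
        have e3 : ‖((a-d:ℝ):ℂ)*z‖ = |a-d| * r := by
          rw [norm_mul, Complex.norm_real, Real.norm_eq_abs, hr]
        have e4 : |a - d| ≤ 2*η := by
          have : a - d = (a-1) - (d-1) := by ring
          rw [this]
          calc |(a-1) - (d-1)| ≤ |a-1| + |d-1| := abs_sub _ _
          _ ≤ 2*η := by linarith
        rw [e2] at t1
        rw [e3, Complex.norm_real, Real.norm_eq_abs] at t2
        have hr2 : 2*r ≤ 1 + r^2 := by nlinarith [sq_nonneg (r-1)]
        have m1 : |a-d| * r ≤ 2*η*r := mul_le_mul_of_nonneg_right e4 hr0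
        have m2 : |c| * r^2 ≤ η * r^2 := mul_le_mul_of_nonneg_right hc (sq_nonneg r)
        have m3 : η * (2*r) ≤ η * (1+r^2) := mul_le_mul_of_nonneg_left hr2 hη0
        linarith
      -- assemble
      have hsz : 0 < Real.sqrt (1 + r^2) := Real.sqrt_pos.mpr (by positivity)
      have hsu : Real.sqrt (1 + ‖u‖ ^ 2) =
          Real.sqrt (‖v‖ ^2 + ‖(a:ℂ)*z+b‖ ^ 2) / ‖v‖ := by
        rw [eq_div_iff (ne_of_gt hvpos)]
        rw [show ‖v‖ = Real.sqrt (‖v‖ ^ 2) from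
          (Real.sqrt_sq (norm_nonneg v)).symm]
        rw [← Real.sqrt_mul (by positivity)]
        congr 1
        rw [Real.sq_sqrt (by positivity), hW]
        ring
      rw [huz, hsu, ← hr]
      have hsD : Real.sqrt ((1+r^2)/8) ≤
          Real.sqrt (‖v‖ ^2 + ‖(a:ℂ)*z+b‖ ^ 2) := Real.sqrt_le_sqrt hD
      have hcomb : 2 * (N / ‖v‖) /
          (Real.sqrt (‖v‖ ^2 + ‖(a:ℂ)*z+b‖ ^ 2) / ‖v‖ *
            Real.sqrt (1 + r^2))
          = 2 * N / (Real.sqrt (‖v‖ ^2 + ‖(a:ℂ)*z+b‖ ^ 2) *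
            Real.sqrt (1 + r^2)) := by
        field_simp
      rw [hcomb]
      have hsDpos : 0 < Real.sqrt (‖v‖ ^2 + ‖(a:ℂ)*z+b‖ ^ 2) := by
        apply lt_of_lt_of_le _ hsD
        apply Real.sqrt_pos.mpr
        positivity
      rw [div_le_iff₀ (by positivity)]
      have key : (1+r^2)/Real.sqrt 8 ≤
          Real.sqrt (‖v‖ ^2 + ‖(a:ℂ)*z+b‖ ^ 2) * Real.sqrt (1+r^2) := by
        have e5 : Real.sqrt ((1+r^2)/8) * Real.sqrt (1+r^2) = (1+r^2)/Real.sqrt 8 := by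
          rw [Real.sqrt_div (by positivity) 8, div_mul_eq_mul_div, Real.mul_self_sqrt (by positivity)]
        rw [← e5]
        exact mul_le_mul_of_nonneg_right hsD (le_of_lt hsz)
      have h8pos : (0:ℝ) < Real.sqrt 8 := Real.sqrt_pos.mpr (by norm_num)
      have sD1 : (1+r^2)/3 ≤ (1+r^2)/Real.sqrt 8 :=
        div_le_div_of_nonneg_left (by positivity) h8pos sqrt_eight_le_three
      have key4 : 12*η*((1+r^2)/Real.sqrt 8) ≤
          12*η*(Real.sqrt (‖v‖ ^2 + ‖(a:ℂ)*z+b‖ ^ 2) * Real.sqrt (1+r^2)) :=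
        mul_le_mul_of_nonneg_left key (by positivity)
      have key5 : 4*η*(1+r^2) ≤ 12*η*((1+r^2)/Real.sqrt 8) := by
        nlinarith [mul_le_mul_of_nonneg_left sD1 (show (0:ℝ) ≤ 12*η by positivity)]
      linarith
  -- done
lemma mDist_id_le {a b c d η : ℝ} (hη : η ≤ 1/4)
    (ha : |a-1| ≤ η) (hb : |b| ≤ η) (hc : |c| ≤ η) (hd : |d-1| ≤ η) :
    mDist (mobiusFun a b c d) id ≤ 12*η := by
  apply ciSup_le
  intro z
  exact chordal_pt_le hη ha hb hc hd z


lemma sin_cos_bound (x : ℝ) :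
    |Real.sin x| ≤ ‖Complex.exp ((x:ℂ) * Complex.I) - 1‖ ∧
    1 - Real.cos x ≤ ‖Complex.exp ((x:ℂ) * Complex.I) - 1‖ := by
  have hE : Complex.exp ((x:ℂ) * Complex.I) - 1 =
      ((Real.cos x - 1 : ℝ):ℂ) + ((Real.sin x : ℝ):ℂ) * Complex.I := by
    rw [Complex.exp_mul_I, ← Complex.ofReal_cos, ← Complex.ofReal_sin]
    push_cast
    ring
  rw [hE, Complex.norm_add_mul_I]
  constructor
  · calc |Real.sin x| = Real.sqrt ((Real.sin x)^2) := (Real.sqrt_sq_eq_abs _).symm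
    _ ≤ _ := Real.sqrt_le_sqrt (by nlinarith [sq_nonneg (Real.cos x - 1)])
  · calc 1 - Real.cos x ≤ |1 - Real.cos x| := le_abs_self _
    _ = Real.sqrt ((1 - Real.cos x)^2) := (Real.sqrt_sq_eq_abs _).symm
    _ ≤ _ := Real.sqrt_le_sqrt (by nlinarith [sq_nonneg (Real.sin x)])

lemma exp_close (θ : ℝ) (ε : ℝ) (hε : 0 < ε) :
    ∃ k : ℕ, 1 ≤ k ∧ ‖Complex.exp (((k:ℝ)*θ : ℝ) * Complex.I) - 1‖ < ε := by
  set u : ℕ → ℂ := fun n => Complex.exp ((((n:ℝ)*θ : ℝ):ℂ) * Complex.I) with hu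
  have habs : ∀ n : ℕ, ‖u n‖ = 1 := fun n => Complex.norm_exp_ofReal_mul_I _
  have hbd : ∀ n : ℕ, u n ∈ Metric.closedBall (0:ℂ) 1 := by
    intro n
    rw [Metric.mem_closedBall, dist_zero_right, habs n]
  obtain ⟨x, -, φ, hφ, hconv⟩ :=
    tendsto_subseq_of_bounded Metric.isBounded_closedBall hbd
  obtain ⟨Nn, hN⟩ := Metric.tendsto_atTop.mp hconv (ε/2) (by linarith)
  have d1 := hN Nn le_rfl
  have d2 := hN (Nn+1) (Nat.le_succ _)
  simp only [Function.comp_apply] at d1 d2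
  have hlt : φ Nn < φ (Nn+1) := hφ (Nat.lt_succ_self _)
  set k := φ (Nn+1) - φ Nn with hk
  have hk1 : 1 ≤ k := Nat.le_sub_of_add_le (by omega)
  have hksum : φ (Nn+1) = φ Nn + k := by omega
  refine ⟨k, hk1, ?_⟩
  have hsplit : u (φ (Nn+1)) = u (φ Nn) * Complex.exp ((((k:ℝ)*θ : ℝ):ℂ) * Complex.I) := by
    rw [hu]
    show Complex.exp _ = _
    rw [← Complex.exp_add]
    congr 1
    rw [hksum]
    push_cast
    ring
  have hd3 : dist (u (φ (Nn+1))) (u (φ Nn)) < ε := by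
    calc dist (u (φ (Nn+1))) (u (φ Nn)) ≤
        dist (u (φ (Nn+1))) x + dist x (u (φ Nn)) := dist_triangle _ _ _
    _ < ε := by rw [dist_comm x]; linarith
  rw [Complex.dist_eq, hsplit] at hd3
  have : u (φ Nn) * Complex.exp ((((k:ℝ)*θ : ℝ):ℂ) * Complex.I) - u (φ Nn) =
      u (φ Nn) * (Complex.exp ((((k:ℝ)*θ : ℝ):ℂ) * Complex.I) - 1) := by ring
  rw [this, norm_mul, habs, one_mul] at hd3
  exact hd3

lemma mobius_ne_id {a b c d : ℝ} (hb : b ≠ 0) : mobiusFun a b c d ≠ id := by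
  intro h
  have h0 := congrFun h (OnePoint.some 0)
  rw [mobius_some] at h0
  by_cases hd : (c:ℂ) * 0 + d = 0
  · rw [if_pos hd] at h0
    exact OnePoint.infty_ne_coe _ h0
  · rw [if_neg hd] at h0
    have h1 : ((a:ℂ) * 0 + b) / ((c:ℂ) * 0 + d) = 0 := Option.some.inj h0
    simp only [mul_zero, zero_add] at h1 hd
    rcases div_eq_zero_iff.mp h1 with h2 | h2
    · exact hb (by exact_mod_cast h2)
    · exact hd h2


set_option maxHeartbeats 1600000 in
lemma elliptic_case {lam mu : ℝ} (h1 : -4 < lam*mu) (h2 : lam*mu < 0) :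
    ¬ SDIF (semigroupGen {mobiusFun 1 lam 0 1, mobiusFun 1 0 mu 1}) := by
  rintro ⟨hsemi, hinv⟩
  have hlam : lam ≠ 0 := by
    intro h0
    rw [h0, zero_mul] at h2
    exact lt_irrefl 0 h2
  set θ := Real.arccos ((2+lam*mu)/2) with hθ
  have hcos : Real.cos θ = (2+lam*mu)/2 := Real.cos_arccos (by linarith) (by linarith)
  set s := Real.sin θ with hsdef
  have hs : 0 < s := by
    rw [hsdef, hθ, Real.sin_arccos]
    apply Real.sqrt_pos.mpr
    nlinarith
  set p : ℕ → ℝ := fun n => Real.sin ((n:ℝ)*θ) / s with hp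
  have hp0 : p 0 = 0 := by
    show Real.sin (((0:ℕ):ℝ)*θ) / s = 0
    norm_num
  have hp1 : p 1 = 1 := by
    show Real.sin (((1:ℕ):ℝ)*θ) / s = 1
    rw [Nat.cast_one, one_mul, ← hsdef, div_self (ne_of_gt hs)]
  have hpsin : ∀ n : ℕ, Real.sin ((n:ℝ)*θ) =
      Real.sin (((n:ℝ)+1)*θ) * ((2+lam*mu)/2) - Real.cos (((n:ℝ)+1)*θ) * s := by
    intro n
    have e2 : (n:ℝ)*θ = ((n:ℝ)+1)*θ - θ := by ring
    rw [e2, Real.sin_sub, hcos, hsdef]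
  have hPrel : ∀ n : ℕ, p n = p (n+1) * ((2+lam*mu)/2) - Real.cos (((n:ℝ)+1)*θ) := by
    intro n
    show Real.sin (((n:ℕ):ℝ)*θ)/s = Real.sin ((((n+1):ℕ):ℝ)*θ)/s * ((2+lam*mu)/2) - _
    push_cast
    rw [hpsin n]
    field_simp
  have hprec : ∀ n : ℕ, p (n+1+1) = (2+lam*mu) * p (n+1) - p n := by
    intro n
    show Real.sin ((((n+1+1):ℕ):ℝ)*θ)/s = (2+lam*mu) * (Real.sin ((((n+1):ℕ):ℝ)*θ)/s)
      - Real.sin (((n:ℕ):ℝ)*θ)/s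
    push_cast
    rw [hpsin n]
    have e1 : ((n:ℝ)+1+1)*θ = ((n:ℝ)+1)*θ + θ := by ring
    rw [e1, Real.sin_add, hcos, ← hsdef]
    field_simp
    ring
  have hdet : ∀ n : ℕ, (p (n+1))^2 + (p n)^2 - (2+lam*mu) * p (n+1) * p n = 1 := by
    intro n
    have hC := Real.sin_sq_add_cos_sq (((n:ℝ)+1)*θ)
    have hA : s^2 + ((2+lam*mu)/2)^2 = 1 := by
      have h3 := Real.sin_sq_add_cos_sq θ
      rw [hcos, ← hsdef] at h3
      exact h3
    have hPs : (p (n+1))^2 * s^2 = 1 - (Real.cos (((n:ℝ)+1)*θ))^2 := by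
      show (Real.sin ((((n+1):ℕ):ℝ)*θ)/s)^2 * s^2 = _
      push_cast
      field_simp
      linear_combination hC
    rw [hPrel n]
    linear_combination hPs - (p (n+1))^2 * hA
  set H := mobiusFun (1+lam*mu) lam mu 1 with hH
  have hfg : mobiusFun 1 lam 0 1 ∘ mobiusFun 1 0 mu 1 = H := by
    rw [mobius_comp 1 lam 0 1 1 0 mu 1 (by norm_num), hH]
    norm_num
  have hdetM : ∀ n : ℕ, (p (n+1)*(1+lam*mu) - p n)*(p (n+1) - p n)
      - (p (n+1)*lam)*(p (n+1)*mu) ≠ 0 := by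
    intro n
    have h4 : (p (n+1)*(1+lam*mu) - p n)*(p (n+1) - p n)
        - (p (n+1)*lam)*(p (n+1)*mu) = 1 := by
      linear_combination hdet n
    rw [h4]
    norm_num
  have hform : ∀ n : ℕ, H^[n+1] = mobiusFun (p (n+1)*(1+lam*mu) - p n)
      (p (n+1)*lam) (p (n+1)*mu) (p (n+1) - p n) := by
    intro n
    induction n with
    | zero =>
      rw [Function.iterate_one, hp1, hp0, hH]
      norm_num
    | succ m ih =>
      rw [Function.iterate_succ', ih, hH,
        mobius_comp (1+lam*mu) lam mu 1 _ _ _ _ (hdetM m)]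
      have e1 : (1+lam*mu)*(p (m+1)*(1+lam*mu) - p m) + lam*(p (m+1)*mu)
          = p (m+1+1)*(1+lam*mu) - p (m+1) := by rw [hprec m]; ring
      have e2 : (1+lam*mu)*(p (m+1)*lam) + lam*(p (m+1) - p m) = p (m+1+1)*lam := by
        rw [hprec m]; ring
      have e3 : mu*(p (m+1)*(1+lam*mu) - p m) + 1*(p (m+1)*mu) = p (m+1+1)*mu := by
        rw [hprec m]; ring
      have e4 : mu*(p (m+1)*lam) + 1*(p (m+1) - p m) = p (m+1+1) - p (m+1) := by
        rw [hprec m]; ring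
      rw [e1, e2, e3, e4]
  have hbaseH : GenBy {mobiusFun 1 lam 0 1, mobiusFun 1 0 mu 1} H := by
    rw [← hfg]
    exact GenBy.comp (GenBy.base (Set.mem_insert _ _))
      (GenBy.base (Set.mem_insert_of_mem _ rfl))
  have hmem : ∀ n : ℕ, GenBy {mobiusFun 1 lam 0 1, mobiusFun 1 0 mu 1} (H^[n+1]) := by
    intro n
    induction n with
    | zero =>
      rw [Function.iterate_one]
      exact hbaseH
    | succ m ih =>
      rw [Function.iterate_succ']
      exact GenBy.comp hbaseH ih
  by_cases hzero : ∃ n : ℕ, Real.sin (((n:ℝ)+1)*θ) = 0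
  · obtain ⟨n, hn⟩ := hzero
    have hpz : p (n+1) = 0 := by
      show Real.sin ((((n+1):ℕ):ℝ)*θ)/s = 0
      push_cast
      rw [hn, zero_div]
    have hpn : p n ≠ 0 := by
      intro h0
      have h5 := hdet n
      rw [hpz, h0] at h5
      norm_num at h5
    have hid : H^[n+1] = id := by
      rw [hform n, hpz]
      have e : mobiusFun (0*(1+lam*mu) - p n) (0*lam) (0*mu) (0 - p n)
          = mobiusFun (-(p n)) 0 0 (-(p n)) := by norm_num
      rw [e, mobius_id (neg_ne_zero.mpr hpn)]
    exact hinv _ (hmem n) _ (hmem n) (by rw [hid]; rfl)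
  · push_neg at hzero
    apply hsemi
    intro ε hε
    have habs0 : (0:ℝ) ≤ |lam*mu|/(2*s) + |lam|/s + |mu|/s := by positivity
    set C0 : ℝ := |lam*mu|/(2*s) + |lam|/s + |mu|/s + 1 with hC0
    have hC0pos : 0 < C0 := by rw [hC0]; linarith
    have hC01 : 1 ≤ C0 := by rw [hC0]; linarith
    set ε' := min (1/(4*C0)) (ε/(13*C0)) with hε'd
    have hε'pos : 0 < ε' := lt_min (by positivity) (by positivity)
    obtain ⟨k, hk1, hkE⟩ := exp_close θ ε' hε'pos
    obtain ⟨m, rfl⟩ : ∃ m, k = m+1 := ⟨k-1, by omega⟩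
    have hsinb := (sin_cos_bound (((m+1:ℕ):ℝ)*θ)).1
    have hcosb := (sin_cos_bound (((m+1:ℕ):ℝ)*θ)).2
    have hsinlt : |Real.sin (((m+1:ℕ):ℝ)*θ)| < ε' := lt_of_le_of_lt hsinb hkE
    have hcoslt : 1 - Real.cos (((m+1:ℕ):ℝ)*θ) < ε' := lt_of_le_of_lt hcosb hkE
    have hcos1 : Real.cos (((m+1:ℕ):ℝ)*θ) ≤ 1 := Real.cos_le_one _
    have hPabs : |p (m+1)| ≤ ε'/s := by
      show |Real.sin ((((m+1):ℕ):ℝ)*θ)/s| ≤ ε'/s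
      rw [abs_div, abs_of_pos hs]
      gcongr
    push_cast at hsinlt hcoslt hcos1
    have hp1ne : p (m+1) ≠ 0 := by
      show Real.sin ((((m+1):ℕ):ℝ)*θ)/s ≠ 0
      apply div_ne_zero _ (ne_of_gt hs)
      push_cast
      exact hzero m
    set η := ε' * C0 with hηd
    have hηbound : η ≤ 1/4 := by
      rw [hηd]
      have h5 : ε' ≤ 1/(4*C0) := min_le_left _ _
      calc ε' * C0 ≤ (1/(4*C0)) * C0 := mul_le_mul_of_nonneg_right h5 (le_of_lt hC0pos)
      _ = 1/4 := by field_simp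
    have ηexp : η = ε'*(|lam*mu|/(2*s)) + ε'*(|lam|/s) + ε'*(|mu|/s) + ε' := by
      rw [hηd, hC0]
      ring
    have d0 : 0 ≤ ε'*(|lam*mu|/(2*s)) := by positivity
    have d1 : 0 ≤ ε'*(|lam|/s) := by positivity
    have d2 : 0 ≤ ε'*(|mu|/s) := by positivity
    set Cm := Real.cos (((m:ℝ)+1)*θ) with hCmd
    have t1 : |p (m+1)| * (|lam*mu|/2) ≤ ε' * (|lam*mu|/(2*s)) := by
      rw [show ε' * (|lam*mu|/(2*s)) = (ε'/s)*(|lam*mu|/2) by ring]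
      exact mul_le_mul_of_nonneg_right hPabs (by positivity)
    have t2 : |p (m+1)| * |lam| ≤ ε' * (|lam|/s) := by
      rw [show ε' * (|lam|/s) = (ε'/s)*|lam| by ring]
      exact mul_le_mul_of_nonneg_right hPabs (abs_nonneg _)
    have t3 : |p (m+1)| * |mu| ≤ ε' * (|mu|/s) := by
      rw [show ε' * (|mu|/s) = (ε'/s)*|mu| by ring]
      exact mul_le_mul_of_nonneg_right hPabs (abs_nonneg _)
    have habs_lm : |lam*mu/2| = |lam*mu|/2 := by
      rw [abs_div]
      norm_num
    have ha : |(p (m+1)*(1+lam*mu) - p m) - 1| ≤ η := by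
      rw [hPrel m, ← hCmd]
      have e : p (m+1)*(1+lam*mu) - (p (m+1) * ((2+lam*mu)/2) - Cm) - 1
          = p (m+1)*(lam*mu/2) - (1 - Cm) := by ring
      rw [e]
      calc |p (m+1)*(lam*mu/2) - (1-Cm)| ≤ |p (m+1)*(lam*mu/2)| + |1-Cm| := abs_sub _ _
      _ ≤ η := by
          rw [abs_mul, habs_lm, abs_of_nonneg (show (0:ℝ) ≤ 1-Cm by rw [hCmd]; linarith)]
          rw [hCmd] at *
          linarith [t1, hcoslt, d1, d2, ηexp]
    have hb : |p (m+1)*lam| ≤ η := by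
      rw [abs_mul]
      linarith [t2, d0, d2, hε'pos, ηexp]
    have hc : |p (m+1)*mu| ≤ η := by
      rw [abs_mul]
      linarith [t3, d0, d1, hε'pos, ηexp]
    have hd : |(p (m+1) - p m) - 1| ≤ η := by
      rw [hPrel m, ← hCmd]
      have e : p (m+1) - (p (m+1) * ((2+lam*mu)/2) - Cm) - 1
          = -(p (m+1)*(lam*mu/2)) - (1 - Cm) := by ring
      rw [e]
      calc |(-(p (m+1)*(lam*mu/2))) - (1-Cm)| ≤ |(-(p (m+1)*(lam*mu/2)))| + |1-Cm| :=
        abs_sub _ _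
      _ ≤ η := by
          rw [abs_neg, abs_mul, habs_lm, abs_of_nonneg (show (0:ℝ) ≤ 1-Cm by rw [hCmd]; linarith)]
          rw [hCmd] at *
          linarith [t1, hcoslt, d1, d2, ηexp]
    refine ⟨H^[m+1], hmem m, ?_, ?_⟩
    · rw [hform m]
      exact mobius_ne_id (mul_ne_zero hp1ne hlam)
    · have hb12 : mDist (H^[m+1]) id ≤ 12*η := by
        rw [hform m]
        exact mDist_id_le hηbound ha hb hc hd
      refine lt_of_le_of_lt hb12 ?_
      have h5 : ε' ≤ ε/(13*C0) := min_le_right _ _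
      have h6 : η ≤ ε/13 := by
        rw [hηd]
        calc ε' * C0 ≤ (ε/(13*C0)) * C0 := mul_le_mul_of_nonneg_right h5 (le_of_lt hC0pos)
        _ = ε/13 := by field_simp
      linarith


lemma genby_mirror {lam mu : ℝ} {W : MoebMap}
    (hW : GenBy {mobiusFun 1 lam 0 1, mobiusFun 1 0 mu 1} W) :
    GenBy {mobiusFun 1 (-lam) 0 1, mobiusFun 1 0 (-mu) 1} (fun q => negM (W (negM q))) := by
  have h := genby_negM hW
  have hA' : (fun q => negM (mobiusFun 1 lam 0 1 (negM q))) = mobiusFun 1 (-lam) 0 1 := by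
    funext q
    rw [mobius_negM]
    norm_num
  have hB' : (fun q => negM (mobiusFun 1 0 mu 1 (negM q))) = mobiusFun 1 0 (-mu) 1 := by
    funext q
    rw [mobius_negM]
    norm_num
  rw [hA', hB'] at h
  exact h

lemma chordal_mirror (W : MoebMap) (q : CHat) :
    chordal (negM (W (negM q))) q = chordal (W (negM q)) (negM q) := by
  rw [← chordal_negM (W (negM q)) (negM q), negM_negM]

lemma disp_pos_neg {lam mu : ℝ} (hl : lam < 0) (hm : mu < 0) :
    ∀ W, GenBy {mobiusFun 1 lam 0 1, mobiusFun 1 0 mu 1} W →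
      Real.sqrt ((min (-lam) (-mu))^2 / ((min (-lam) (-mu))^2 + 1)) ≤
        chordal (W (negM (OnePoint.some Complex.I))) (negM (OnePoint.some Complex.I)) := by
  intro W hW
  have h := disp_pos (neg_pos.mpr hl) (neg_pos.mpr hm) _ (genby_mirror hW)
  calc Real.sqrt ((min (-lam) (-mu))^2 / ((min (-lam) (-mu))^2 + 1))
      ≤ chordal (negM (W (negM (OnePoint.some Complex.I)))) (OnePoint.some Complex.I) := h
  _ = _ := chordal_mirror W _

lemma disp_neg4_neg {lam mu : ℝ} (hl : lam < 0) (hmu : 0 < mu) (hlm : lam*mu ≤ -4) :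
    ∀ W, GenBy {mobiusFun 1 lam 0 1, mobiusFun 1 0 mu 1} W →
      Real.sqrt (4*(-lam)^2 / ((1+(-lam)^2)*((-lam)^2+4))) ≤
        chordal (W (negM (OnePoint.some ((-(-lam) : ℝ):ℂ))))
          (negM (OnePoint.some ((-(-lam) : ℝ):ℂ))) := by
  intro W hW
  have h := disp_neg4 (neg_pos.mpr hl) (show -mu < 0 by linarith)
    (show (-lam)*(-mu) ≤ -4 by nlinarith) _ (genby_mirror hW)
  calc Real.sqrt (4*(-lam)^2 / ((1+(-lam)^2)*((-lam)^2+4)))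
      ≤ chordal (negM (W (negM (OnePoint.some ((-(-lam) : ℝ):ℂ)))))
        (OnePoint.some ((-(-lam) : ℝ):ℂ)) := h
  _ = _ := chordal_mirror W _

/-- Corollary cia: for f(z) = z + λ and g(z) = z/(μz+1), the semigroup
generated by f and g is semidiscrete and inverse free if and only if
λμ ∉ (−4, 0]. -/
theorem statement18 (lam mu : ℝ) :
    SDIF (semigroupGen {mobiusFun 1 lam 0 1, mobiusFun 1 0 mu 1}) ↔
      ¬ (-4 < lam * mu ∧ lam * mu ≤ 0) := by
  constructor
  · rintro ⟨hsemi, hinv⟩ ⟨hgt, hle⟩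
    rcases eq_or_lt_of_le hle with h0 | hneg
    · rcases mul_eq_zero.mp h0 with hl | hm
      · have hid : mobiusFun 1 lam 0 1 = id := by
          rw [hl]
          exact mobius_id one_ne_zero
        exact hinv _ (GenBy.base (Set.mem_insert _ _)) _ (GenBy.base (Set.mem_insert _ _))
          (by rw [hid]; rfl)
      · have hid : mobiusFun 1 0 mu 1 = id := by
          rw [hm]
          exact mobius_id one_ne_zero
        exact hinv _ (GenBy.base (Set.mem_insert_of_mem _ rfl)) _
          (GenBy.base (Set.mem_insert_of_mem _ rfl)) (by rw [hid]; rfl)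
    · exact elliptic_case hgt hneg ⟨hsemi, hinv⟩
  · intro hn
    rcases lt_or_ge 0 (lam*mu) with hpos | hle0
    · rcases lt_trichotomy lam 0 with hl | hl | hl
      · have hmu : mu < 0 := by
          rcases lt_trichotomy mu 0 with h | h | h
          · exact h
          · exfalso; rw [h, mul_zero] at hpos; exact lt_irrefl 0 hpos
          · exfalso; nlinarith
        have hmin : 0 < min (-lam) (-mu) := lt_min (by linarith) (by linarith)
        exact sdif_of_displacement _ (negM (OnePoint.some Complex.I)) _
          (Real.sqrt_pos.mpr (by positivity)) (disp_pos_neg hl hmu)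
      · exfalso
        rw [hl, zero_mul] at hpos
        exact lt_irrefl 0 hpos
      · have hmu : 0 < mu := by
          rcases lt_trichotomy mu 0 with h | h | h
          · exfalso; nlinarith
          · exfalso; rw [h, mul_zero] at hpos; exact lt_irrefl 0 hpos
          · exact h
        have hmin : 0 < min lam mu := lt_min hl hmu
        exact sdif_of_displacement _ (OnePoint.some Complex.I) _
          (Real.sqrt_pos.mpr (by positivity)) (disp_pos hl hmu)
    · have hle4 : lam*mu ≤ -4 := by
        by_contra h
        push_neg at h
        exact hn ⟨h, hle0⟩
      rcases lt_trichotomy lam 0 with hl | hl | hl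
      · have hmu : 0 < mu := by
          rcases lt_trichotomy mu 0 with h | h | h
          · exfalso; nlinarith
          · exfalso; rw [h, mul_zero] at hle4; linarith
          · exact h
        have hlneg : (0:ℝ) < -lam := by linarith
        exact sdif_of_displacement _ (negM (OnePoint.some ((-(-lam) : ℝ):ℂ))) _
          (Real.sqrt_pos.mpr (by positivity)) (disp_neg4_neg hl hmu hle4)
      · exfalso
        rw [hl, zero_mul] at hle4
        linarith
      · have hmu : mu < 0 := by
          rcases lt_trichotomy mu 0 with h | h | h
          · exact h
          · exfalso; rw [h, mul_zero] at hle4; linarith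
          · exfalso; nlinarith
        exact sdif_of_displacement _ (OnePoint.some ((-lam : ℝ):ℂ)) _
          (Real.sqrt_pos.mpr (by positivity)) (disp_neg4 hl hmu hle4)

end MobiusSG

end
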